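/- Let m ≥ 4 be an integer and Δ: [1, 3m-4] → {1,2,3} a coloring. If some color c satisfies |Δ^{-1}(c)| ≥ 3m - ⌈m/2⌉ - 2, then there exist monochromatic m-sets X ≺ Y in [1, 3m-4] with 2(x_m - x_1) ≤ y_m - x_1 (i.e., Δ is not an L(3)-coloring). -/

import Mathlib

/-- `x` is a monochromatic m-set (indexed 1..m) inside `S` under coloring `Δ`. -/
def IsMonoMSet (m : ℕ) (Δ : ℕ → ℕ) (S : Finset ℕ) (x : ℕ → ℕ) : Prop :=
  (∀ i j, 1 ≤ i → i < j → j ≤ m → x i < x j) ∧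
  (∀ i, 1 ≤ i → i ≤ m → x i ∈ S) ∧
  (∀ i, 1 ≤ i → i ≤ m → Δ (x i) = Δ (x 1))

/-- There exist monochromatic m-sets X ≺ Y in `S` with 2(x_m - x_1) ≤ y_m - x_1. -/
def HasGoodPair (m : ℕ) (Δ : ℕ → ℕ) (S : Finset ℕ) : Prop :=
  ∃ x y : ℕ → ℕ, IsMonoMSet m Δ S x ∧ IsMonoMSet m Δ S y ∧
    x m < y 1 ∧ 2 * (x m - x 1) ≤ y m - x 1

/-- `g m r` : least N such that every r-coloring of [1,N] has a good pair. -/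
noncomputable def g (m r : ℕ) : ℕ :=
  sInf {N | ∀ Δ : ℕ → ℕ, (∀ z ∈ Finset.Icc 1 N, Δ z ∈ Finset.Icc 1 r) →
    HasGoodPair m Δ (Finset.Icc 1 N)}

private lemma sorted_gap (l : List ℕ) (hl : l.Pairwise (· < ·)) :
    ∀ i k, i + k < l.length → l.getD i 0 + k ≤ l.getD (i + k) 0 := by
  intro i k
  induction k with
  | zero => simp
  | succ k ih =>
    intro h
    have h1 : i + k < l.length := by omega
    have h2 := ih h1
    have hlt : l.get ⟨i + k, h1⟩ < l.get ⟨i + k + 1, by omega⟩ :=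
      hl.sortedLT.strictMono_get (by simp)
    rw [List.getD_eq_get l 0 ⟨i + k, h1⟩] at h2
    rw [show i + (k+1) = i + k + 1 by omega, List.getD_eq_get l 0 ⟨i + k + 1, (by omega : i + k + 1 < l.length)⟩]
    omega

theorem stmt8 (m : ℕ) (hm : 4 ≤ m) (Δ : ℕ → ℕ)
    (hΔ : ∀ z ∈ Finset.Icc 1 (3 * m - 4), Δ z ∈ Finset.Icc 1 3)
    (c : ℕ)
    (hc : 3 * m - (m + 1) / 2 - 2 ≤
      ((Finset.Icc 1 (3 * m - 4)).filter (fun z => Δ z = c)).card) :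
    HasGoodPair m Δ (Finset.Icc 1 (3 * m - 4)) := by
  set A := (Finset.Icc 1 (3 * m - 4)).filter (fun z => Δ z = c) with hA
  set l := A.sort (· ≤ ·) with hl
  have hsort : l.Pairwise (· < ·) := A.sortedLT_sort.pairwise
  have hlen : l.length = A.card := A.length_sort _
  set n := A.card with hn
  have hnm : 2 * m ≤ n := by omega
  have hmem : ∀ i, i < n → l.getD i 0 ∈ A := by
    intro i hi
    rw [List.getD_eq_getElem l 0 (by omega : i < l.length)]
    have := l.getElem_mem (by omega : i < l.length)
    rwa [← Finset.mem_sort (· ≤ ·)]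
  have hmemIcc : ∀ i, i < n → l.getD i 0 ∈ Finset.Icc 1 (3 * m - 4) := by
    intro i hi
    exact (Finset.mem_filter.mp (hmem i hi)).1
  have hcol : ∀ i, i < n → Δ (l.getD i 0) = c := by
    intro i hi
    exact (Finset.mem_filter.mp (hmem i hi)).2
  have hmono : ∀ i j, i < j → j < n → l.getD i 0 < l.getD j 0 := by
    intro i j hij hj
    rw [List.getD_eq_get l 0 ⟨i, (by omega : i < l.length)⟩,
        List.getD_eq_get l 0 ⟨j, (by omega : j < l.length)⟩]
    exact hsort.sortedLT.strictMono_get (by simpa using hij)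
  refine ⟨fun i => l.getD (i - 1) 0, fun i => l.getD (n - m + i - 1) 0, ⟨?_, ?_, ?_⟩, ⟨?_, ?_, ?_⟩, ?_, ?_⟩
  · intro i j hi hij hj
    exact hmono (i-1) (j-1) (by omega) (by omega)
  · intro i hi him
    exact hmemIcc (i-1) (by omega)
  · intro i hi him
    rw [hcol (i-1) (by omega), hcol 0 (by omega)]
  · intro i j hi hij hj
    exact hmono (n - m + i - 1) (n - m + j - 1) (by omega) (by omega)
  · intro i hi him
    exact hmemIcc (n - m + i - 1) (by omega)
  · intro i hi him
    rw [hcol (n - m + i - 1) (by omega), hcol (n - m + 1 - 1) (by omega)]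
  · exact hmono (m - 1) (n - m + 1 - 1) (by omega) (by omega)
  · -- 2 * (l[m-1] - l[0]) ≤ l[n-1] - l[0]
    have hidx : n - m + m - 1 = n - 1 := by omega
    show 2 * (l.getD (m - 1) 0 - l.getD 0 0) ≤ l.getD (n - m + m - 1) 0 - l.getD 0 0
    rw [hidx]
    have hgap : l.getD (m - 1) 0 + (n - m) ≤ l.getD (n - 1) 0 := by
      have := sorted_gap l hsort (m - 1) (n - m) (by omega)
      rwa [show m - 1 + (n - m) = n - 1 by omega] at this
    have h2 : l.getD (n - 1) 0 ≤ 3 * m - 4 :=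
      (Finset.mem_Icc.mp (hmemIcc (n - 1) (by omega))).2
    have h3 : 1 ≤ l.getD 0 0 :=
      (Finset.mem_Icc.mp (hmemIcc 0 (by omega))).1
    have h4 : l.getD 0 0 < l.getD (m - 1) 0 := hmono 0 (m - 1) (by omega) (by omega)
    omega
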